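/- Let X ∈ ℝ^{n×p} with XᵀX invertible, y ∈ ℝ^n; for i = 1,…,N let Δ_i, θ_i^{(1)} ∈ ℝ^p, g_i = 2XᵀX(θ_i^{(1)} − Δ_i) − 2Xᵀy, y_i' = −Xθ_i^{(1)} + y + XΔ_i, and Z_i = θ_i^{(1)} − Δ_i − (XᵀX)⁻¹Xᵀy. Define l^total(B) = (1/N)Σ_{i=1}^N ‖XBg_i + y_i'‖². If {Z_1,…,Z_N} spans ℝ^p, then B* = (1/2)(XᵀX)⁻¹ is the unique global minimizer of l^total, with minimum value l* = ‖X(XᵀX)⁻¹Xᵀy − y‖². -/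
import Mathlib


open Finset Matrix

/-- if the `Zᵢ = θᵢ⁽¹⁾ − Δᵢ − (XᵀX)⁻¹Xᵀy` span ℝᵖ, then
`B* = (1/2)(XᵀX)⁻¹` is the unique global minimizer of the one-step meta-training loss
`l^total(B) = (1/N)Σᵢ ‖XBgᵢ + yᵢ'‖²`, with minimum value `l* = ‖X(XᵀX)⁻¹Xᵀy − y‖²`. -/
theorem Bstar_unique_global_minimizer {n p N : ℕ} (hN : 0 < N)
    (X : Matrix (Fin n) (Fin p) ℝ) (hX : IsUnit (Xᵀ * X)) (y : Fin n → ℝ)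
    (Δ θ₁ : Fin N → Fin p → ℝ)
    (g : Fin N → Fin p → ℝ)
    (hg : ∀ i, g i = (2 : ℝ) • ((Xᵀ * X) *ᵥ (θ₁ i - Δ i)) - (2 : ℝ) • (Xᵀ *ᵥ y))
    (y' : Fin N → Fin n → ℝ)
    (hy' : ∀ i, y' i = -(X *ᵥ θ₁ i) + y + X *ᵥ Δ i)
    (Z : Fin N → Fin p → ℝ)
    (hZ : ∀ i, Z i = θ₁ i - Δ i - (Xᵀ * X)⁻¹ *ᵥ (Xᵀ *ᵥ y))
    (hspan : Submodule.span ℝ (Set.range Z) = ⊤)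
    (ltotal : Matrix (Fin p) (Fin p) ℝ → ℝ)
    (hltotal : ∀ B, ltotal B = (1 / (N : ℝ)) * ∑ i, ∑ j, ((X *ᵥ (B *ᵥ g i) + y' i) j) ^ 2)
    (lstar : ℝ)
    (hlstar : lstar = ∑ j, ((X *ᵥ ((Xᵀ * X)⁻¹ *ᵥ (Xᵀ *ᵥ y)) - y) j) ^ 2)
    (Bstar : Matrix (Fin p) (Fin p) ℝ) (hBstar : Bstar = ((1 : ℝ) / 2) • (Xᵀ * X)⁻¹) :
    (∀ B, ltotal Bstar ≤ ltotal B) ∧ (∀ B, ltotal B = ltotal Bstar → B = Bstar) ∧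
      ltotal Bstar = lstar := by
  set A : Matrix (Fin p) (Fin p) ℝ := Xᵀ * X with hA
  have hdet : IsUnit A.det := (Matrix.isUnit_iff_isUnit_det A).mp hX
  have hinv1 : A⁻¹ * A = 1 := Matrix.nonsing_inv_mul A hdet
  have hinv2 : A * A⁻¹ = 1 := Matrix.mul_nonsing_inv A hdet
  set θ' : Fin p → ℝ := A⁻¹ *ᵥ (Xᵀ *ᵥ y) with hθ'
  set r : Fin n → ℝ := y - X *ᵥ θ' with hrdef
  have hXr : Xᵀ *ᵥ r = 0 := by
    rw [hrdef, Matrix.mulVec_sub, hθ', Matrix.mulVec_mulVec, ← hA, Matrix.mulVec_mulVec,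
      hinv2, Matrix.one_mulVec, sub_self]
  -- decomposition of the residual vector
  set M : Matrix (Fin p) (Fin p) ℝ → Matrix (Fin p) (Fin p) ℝ :=
    fun B => (2 : ℝ) • (B * A) - 1 with hM
  have hgZ : ∀ i, g i = (2 : ℝ) • (A *ᵥ Z i) := by
    intro i
    rw [hg, hZ, hθ']
    simp only [Matrix.mulVec_sub, Matrix.mulVec_mulVec]
    rw [← Matrix.mul_assoc, hinv2, Matrix.one_mul]
    module
  have hy'r : ∀ i, y' i = r - X *ᵥ Z i := by
    intro i
    rw [hy', hZ, hrdef, Matrix.mulVec_sub, Matrix.mulVec_sub]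
    abel
  have hdecomp : ∀ B i, X *ᵥ (B *ᵥ g i) + y' i = X *ᵥ (M B *ᵥ Z i) + r := by
    intro B i
    rw [hgZ, hy'r, hM]
    simp only [Matrix.mulVec_smul, Matrix.mulVec_mulVec, Matrix.sub_mulVec,
      Matrix.smul_mulVec, Matrix.one_mulVec]
    rw [Matrix.mulVec_sub, Matrix.mulVec_smul, Matrix.mulVec_mulVec]
    abel
  -- squared norm decomposition
  have horth : ∀ w : Fin p → ℝ, (X *ᵥ w) ⬝ᵥ r = 0 := by
    intro w
    rw [dotProduct_comm, Matrix.dotProduct_mulVec, ← Matrix.mulVec_transpose, hXr,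
      zero_dotProduct]
  have hsq : ∀ w : Fin p → ℝ,
      (∑ j, ((X *ᵥ w + r) j) ^ 2) = (X *ᵥ w) ⬝ᵥ (X *ᵥ w) + r ⬝ᵥ r := by
    intro w
    have h1 : (∑ j, ((X *ᵥ w + r) j) ^ 2) = (X *ᵥ w + r) ⬝ᵥ (X *ᵥ w + r) := by
      simp [dotProduct, sq]
    rw [h1, add_dotProduct, dotProduct_add, dotProduct_add, horth,
      dotProduct_comm r (X *ᵥ w), horth]
    ring
  -- loss formula
  have hloss : ∀ B, ltotal B =
      (1 / (N : ℝ)) * ∑ i, (X *ᵥ (M B *ᵥ Z i)) ⬝ᵥ (X *ᵥ (M B *ᵥ Z i)) + r ⬝ᵥ r := by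
    intro B
    rw [hltotal]
    have : ∀ i : Fin N, (∑ j, ((X *ᵥ (B *ᵥ g i) + y' i) j) ^ 2) =
        (X *ᵥ (M B *ᵥ Z i)) ⬝ᵥ (X *ᵥ (M B *ᵥ Z i)) + r ⬝ᵥ r := by
      intro i; rw [hdecomp]; exact hsq _
    rw [Finset.sum_congr rfl (fun i _ => this i), Finset.sum_add_distrib, Finset.sum_const,
      Finset.card_univ, Fintype.card_fin, mul_add, nsmul_eq_mul]
    have hN' : (N : ℝ) ≠ 0 := Nat.cast_ne_zero.mpr hN.ne'
    field_simp
  have hMBstar : M Bstar = 0 := by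
    rw [hM, hBstar]
    simp only [smul_mul_assoc, hinv1, smul_smul]
    norm_num
  have hlBstar : ltotal Bstar = r ⬝ᵥ r := by
    rw [hloss, hMBstar]
    simp
  have hlstar' : lstar = r ⬝ᵥ r := by
    rw [hlstar, hrdef]
    simp only [dotProduct]
    apply Finset.sum_congr rfl
    intro j _
    have : (X *ᵥ θ' - y) j = -((y - X *ᵥ θ') j) := by simp
    rw [this]
    ring
  have hsumnn : ∀ B, 0 ≤ ∑ i, (X *ᵥ (M B *ᵥ Z i)) ⬝ᵥ (X *ᵥ (M B *ᵥ Z i)) := by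
    intro B
    apply Finset.sum_nonneg
    intro i _
    exact Finset.sum_nonneg fun j _ => mul_self_nonneg _
  have hNpos : (0 : ℝ) < 1 / (N : ℝ) := by positivity
  refine ⟨?_, ?_, hlBstar.trans hlstar'.symm⟩
  · intro B
    rw [hlBstar, hloss B]
    have := mul_nonneg hNpos.le (hsumnn B)
    linarith
  · intro B hB
    rw [hlBstar, hloss B] at hB
    have hsum0 : ∑ i, (X *ᵥ (M B *ᵥ Z i)) ⬝ᵥ (X *ᵥ (M B *ᵥ Z i)) = 0 := by
      have h := hB
      have : (1 / (N : ℝ)) * ∑ i, (X *ᵥ (M B *ᵥ Z i)) ⬝ᵥ (X *ᵥ (M B *ᵥ Z i)) = 0 := by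
        linarith
      exact (mul_eq_zero.mp this).resolve_left hNpos.ne'
    have hterm : ∀ i : Fin N, (X *ᵥ (M B *ᵥ Z i)) ⬝ᵥ (X *ᵥ (M B *ᵥ Z i)) = 0 := by
      intro i
      have := (Finset.sum_eq_zero_iff_of_nonneg (fun i _ =>
        (Finset.sum_nonneg fun j _ => mul_self_nonneg _ :
          (0:ℝ) ≤ (X *ᵥ (M B *ᵥ Z i)) ⬝ᵥ (X *ᵥ (M B *ᵥ Z i))))).mp hsum0
      exact this i (Finset.mem_univ i)
    have hMZ : ∀ i, M B *ᵥ Z i = 0 := by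
      intro i
      have hXv : X *ᵥ (M B *ᵥ Z i) = 0 := dotProduct_self_eq_zero.mp (hterm i)
      have hAv : A *ᵥ (M B *ᵥ Z i) = 0 := by
        rw [hA, ← Matrix.mulVec_mulVec, hXv, Matrix.mulVec_zero]
      have h3 := congrArg (fun v => A⁻¹ *ᵥ v) hAv
      simpa only [Matrix.mulVec_mulVec, ← Matrix.mul_assoc, hinv1, Matrix.one_mul,
        Matrix.mulVec_zero] using h3
    -- M B kills everything via the span hypothesis
    have hker : ∀ v : Fin p → ℝ, M B *ᵥ v = 0 := by
      intro v
      have hv : v ∈ Submodule.span ℝ (Set.range Z) := by rw [hspan]; trivial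
      have : Set.range Z ⊆ (LinearMap.ker (M B).mulVecLin : Set (Fin p → ℝ)) := by
        rintro _ ⟨i, rfl⟩
        simpa [Matrix.mulVecLin] using hMZ i
      have hle := Submodule.span_le.mpr this
      have := hle hv
      simpa [Matrix.mulVecLin] using this
    have hM0 : M B = 0 := by
      ext i j
      have := congrFun (hker (Pi.single j 1)) i
      simpa using this
    have hBA : B * A = ((1 : ℝ) / 2) • 1 := by
      have h2 : (2 : ℝ) • (B * A) = 1 := by
        have := hM0
        rw [hM] at this
        linear_combination (norm := module) this
      calc B * A = ((1 : ℝ) / 2) • ((2 : ℝ) • (B * A)) := by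
            rw [smul_smul]; norm_num
        _ = ((1 : ℝ) / 2) • (1 : Matrix (Fin p) (Fin p) ℝ) := by rw [h2]
    calc B = B * (A * A⁻¹) := by rw [hinv2, Matrix.mul_one]
      _ = (B * A) * A⁻¹ := (Matrix.mul_assoc B A A⁻¹).symm
      _ = (((1 : ℝ) / 2) • (1 : Matrix (Fin p) (Fin p) ℝ)) * A⁻¹ := by rw [hBA]
      _ = Bstar := by rw [hBstar, smul_mul_assoc, Matrix.one_mul]
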